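/- Let k be a finite field, let (s_1, t_1), …, (s_m, t_m) be data with s_j ∈ k^n and t_j ∈ k, and let M_X ⊆ k[x_1, …, x_n] be the ideal generated by all monomials m(s_j, s_l) = ∏_{i : (s_j)_i ≠ (s_l)_i} x_i over pairs j, l with t_j ≠ t_l. Then a prime ideal P of k[x_1, …, x_n] is a minimal prime over M_X if and only if P = ⟨x_i : i ∈ G⟩ for some subset G ⊆ {1, …, n} that is minimal with respect to inclusion among all subsets G' for which there exists a polynomial f ∈ k[x_i : i ∈ G'] with f(s_j) = t_j for all j. -/

import Mathlib

/-- The square-free monomial `m(p, q) = ∏_{i : p i ≠ q i} x i` recording the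
coordinates in which the points `p, q ∈ k^n` differ. -/
noncomputable def pairMonomial {k : Type*} [Field k] [DecidableEq k] {n : ℕ}
    (p q : Fin n → k) : MvPolynomial (Fin n) k :=
  ∏ i ∈ Finset.univ.filter (fun i => p i ≠ q i), MvPolynomial.X i

open MvPolynomial

section Aux

variable {k : Type*} [Field k] {n : ℕ}

lemma eval_zero_of_mem_spanX {G : Set (Fin n)} {a : Fin n → k}
    (ha : ∀ i ∈ G, a i = 0) {f : MvPolynomial (Fin n) k}
    (hf : f ∈ Ideal.span (X '' G)) : eval a f = 0 := by
  have h : Ideal.span (X '' G) ≤ RingHom.ker (eval a) := by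
    rw [Ideal.span_le]
    rintro _ ⟨i, hi, rfl⟩
    simp [RingHom.mem_ker, ha i hi]
  exact h hf

lemma X_mem_spanX {G : Set (Fin n)} {i : Fin n} :
    X i ∈ Ideal.span (X '' G : Set (MvPolynomial (Fin n) k)) ↔ i ∈ G := by
  classical
  constructor
  · intro h
    by_contra hi
    have h0 := eval_zero_of_mem_spanX
      (a := fun j => if j ∈ G then (0 : k) else 1) (fun j hj => if_pos hj) h
    simp [if_neg hi] at h0
  · intro h
    exact Ideal.subset_span ⟨i, h, rfl⟩

lemma spanX_isPrime (G : Set (Fin n)) :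
    (Ideal.span (X '' G : Set (MvPolynomial (Fin n) k))).IsPrime := by
  classical
  set e : MvPolynomial (Fin n) k →ₐ[k] MvPolynomial {i : Fin n // i ∉ G} k :=
    aeval (fun i => if h : i ∈ G then 0 else X ⟨i, h⟩) with he
  have key : ∀ f : MvPolynomial (Fin n) k,
      f - rename (Subtype.val) (e f) ∈ Ideal.span (X '' G) := by
    intro f
    induction f using MvPolynomial.induction_on with
    | C a =>
        have h0 : (C a : MvPolynomial (Fin n) k) - rename (Subtype.val) (e (C a)) = 0 := by
          simp [he, MvPolynomial.algebraMap_eq]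
        rw [h0]; exact Ideal.zero_mem _
    | add p q hp hq =>
        have := Ideal.add_mem _ hp hq
        have h0 : p + q - rename (Subtype.val) (e (p + q)) =
            (p - rename (Subtype.val) (e p)) + (q - rename (Subtype.val) (e q)) := by
          simp only [map_add]; ring
        rw [h0]; exact this
    | mul_X p i hp =>
        by_cases hi : i ∈ G
        · have h0 : e (p * X i) = 0 := by
            simp [he, aeval_X, dif_pos hi]
          rw [h0, map_zero, sub_zero]
          exact Ideal.mul_mem_left _ _ (Ideal.subset_span ⟨i, hi, rfl⟩)
        · have h0 : p * X i - rename (Subtype.val) (e (p * X i)) =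
              (p - rename (Subtype.val) (e p)) * X i := by
            simp [he, aeval_X, dif_neg hi]
            ring
          rw [h0]
          exact Ideal.mul_mem_right _ _ hp
  have hker : RingHom.ker e = Ideal.span (X '' G) := by
    apply le_antisymm
    · intro f hf
      have h0 : e f = 0 := hf
      have h1 := key f
      rwa [h0, map_zero, sub_zero] at h1
    · rw [Ideal.span_le]
      rintro _ ⟨i, hi, rfl⟩
      simp [RingHom.mem_ker, he, aeval_X, dif_pos hi]
  rw [← hker]
  exact RingHom.ker_isPrime e

lemma pairMonomial_mem_spanX [DecidableEq k] {G : Set (Fin n)} {p q : Fin n → k} :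
    pairMonomial p q ∈ Ideal.span (X '' G : Set (MvPolynomial (Fin n) k)) ↔
      ∃ i ∈ G, p i ≠ q i := by
  classical
  constructor
  · intro h
    by_contra hc
    push_neg at hc
    have h0 := eval_zero_of_mem_spanX
      (a := fun j => if j ∈ G then (0 : k) else 1) (fun j hj => if_pos hj) h
    rw [pairMonomial, map_prod] at h0
    have hone : ∀ i ∈ Finset.univ.filter (fun i => p i ≠ q i),
        (eval (fun j => if j ∈ G then (0 : k) else 1)) (X i) = 1 := by
      intro i hi
      have hi' : p i ≠ q i := (Finset.mem_filter.1 hi).2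
      have hiG : i ∉ G := fun hiG => hi' (hc i hiG)
      simp [if_neg hiG]
    rw [Finset.prod_congr rfl hone, Finset.prod_const_one] at h0
    exact one_ne_zero h0
  · rintro ⟨i, hiG, hpq⟩
    have hi : i ∈ Finset.univ.filter (fun i => p i ≠ q i) := by simp [hpq]
    rw [pairMonomial, ← Finset.mul_prod_erase _ _ hi]
    exact Ideal.mul_mem_right _ _ (Ideal.subset_span ⟨i, hiG, rfl⟩)

lemma exists_fit {m : ℕ} [Fintype k] (G : Set (Fin n)) (s : Fin m → Fin n → k) (t : Fin m → k)
    (hsep : ∀ j l : Fin m, (∀ i ∈ G, s j i = s l i) → t j = t l) :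
    ∃ f ∈ supported k G, ∀ j, eval (s j) f = t j := by
  classical
  set Gf : Finset (Fin n) := Set.Finite.toFinset (Set.toFinite G) with hGf
  have hGfmem : ∀ i, i ∈ Gf ↔ i ∈ G := fun i => Set.Finite.mem_toFinset _
  set Q := Fintype.card k with hQ
  set ind : (Fin n → k) → MvPolynomial (Fin n) k :=
    fun c => ∏ i ∈ Gf, (1 - (X i - C (c i)) ^ (Q - 1)) with hind
  set e : Fin m → (Fin n → k) := fun j i => if i ∈ G then s j i else 0 with he
  set T : (Fin n → k) → k := fun c => if h : ∃ j, e j = c then t h.choose else 0 with hT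
  refine ⟨∑ c ∈ Finset.univ.image e, C (T c) * ind c, ?_, ?_⟩
  · apply Subalgebra.sum_mem
    intro c _
    apply Subalgebra.mul_mem
    · have : (C (T c) : MvPolynomial (Fin n) k) = algebraMap k _ (T c) := rfl
      rw [this]; exact Subalgebra.algebraMap_mem _ _
    · apply Subalgebra.prod_mem
      intro i hi
      apply Subalgebra.sub_mem _ (Subalgebra.one_mem _)
      apply Subalgebra.pow_mem
      apply Subalgebra.sub_mem
      · exact (X_mem_supported (R := k)).2 ((hGfmem i).1 hi)
      · have : (C (c i) : MvPolynomial (Fin n) k) = algebraMap k _ (c i) := rfl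
        rw [this]; exact Subalgebra.algebraMap_mem _ _
  · intro j
    have heval : ∀ c ∈ Finset.univ.image e,
        eval (s j) (ind c) = if c = e j then 1 else 0 := by
      intro c hc
      obtain ⟨l, -, rfl⟩ := Finset.mem_image.1 hc
      rw [hind]
      simp only [map_prod, map_sub, map_one, map_pow, eval_X, eval_C]
      have step : ∀ i ∈ Gf, (1 - ((s j) i - e l i) ^ (Q - 1)) =
          if s j i = e l i then (1 : k) else 0 := by
        intro i _
        by_cases hh : s j i = e l i
        · rw [if_pos hh, hh, sub_self, zero_pow, sub_zero]
          have h2 : 1 < Q := Fintype.one_lt_card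
          omega
        · rw [if_neg hh, FiniteField.pow_card_sub_one_eq_one _ (sub_ne_zero.2 hh), sub_self]
      rw [Finset.prod_congr rfl step, Finset.prod_boole]
      by_cases hel : e l = e j
      · rw [if_pos hel, if_pos]
        intro i hi
        have hiG := (hGfmem i).1 hi
        have : e l i = s j i := by rw [hel, he]; simp [if_pos hiG]
        exact this.symm
      · rw [if_neg hel, if_neg]
        intro hall
        apply hel
        funext i
        by_cases hiG : i ∈ G
        · have h1 : e j i = s j i := by rw [he]; simp [if_pos hiG]
          rw [h1]
          exact (hall i ((hGfmem i).2 hiG)).symm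
        · simp [he, if_neg hiG]
    rw [map_sum]
    rw [Finset.sum_congr rfl (fun c hc => by rw [map_mul, eval_C, heval c hc])]
    have hstep : ∀ c ∈ Finset.univ.image e,
        T c * (if c = e j then (1 : k) else 0) = if c = e j then T c else 0 := by
      intro c _
      split <;> simp
    rw [Finset.sum_congr rfl hstep, Finset.sum_ite_eq' _ (e j) T,
      if_pos (Finset.mem_image_of_mem e (Finset.mem_univ j))]
    have hex : ∃ l, e l = e j := ⟨j, rfl⟩
    rw [hT]
    simp only [dif_pos hex]
    apply hsep
    intro i hiG
    have h1 := congrFun hex.choose_spec i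
    simpa [he, if_pos hiG] using h1

lemma span_le_iff_exists_fit {m : ℕ} [Fintype k] [DecidableEq k] (G : Set (Fin n))
    (s : Fin m → Fin n → k) (t : Fin m → k) :
    Ideal.span {M : MvPolynomial (Fin n) k |
        ∃ j l, t j ≠ t l ∧ M = pairMonomial (s j) (s l)} ≤ Ideal.span (X '' G) ↔
      ∃ f ∈ supported k G, ∀ j, eval (s j) f = t j := by
  rw [Ideal.span_le]
  constructor
  · intro h
    apply exists_fit G s t
    intro j l hagree
    by_contra ht
    have hm : pairMonomial (s j) (s l) ∈ Ideal.span (X '' G) := h ⟨j, l, ht, rfl⟩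
    obtain ⟨i, hiG, hne⟩ := pairMonomial_mem_spanX.1 hm
    exact hne (hagree i hiG)
  · rintro ⟨f, hf, hfit⟩ M ⟨j, l, ht, rfl⟩
    apply pairMonomial_mem_spanX.2
    by_contra hc
    push_neg at hc
    apply ht
    rw [← hfit j, ← hfit l]
    have hf' : f ∈ (rename ((↑) : G → Fin n)).range := by
      rw [← supported_eq_range_rename]; exact hf
    rw [AlgHom.mem_range] at hf'
    obtain ⟨g, rfl⟩ := hf'
    rw [eval_rename, eval_rename]
    have hco : s j ∘ (Subtype.val : G → Fin n) = s l ∘ Subtype.val :=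
      funext fun i => hc i.1 i.2
    rw [hco]

lemma prime_varSpan_le {m : ℕ} [Fintype k] [DecidableEq k]
    (s : Fin m → Fin n → k) (t : Fin m → k) {P : Ideal (MvPolynomial (Fin n) k)}
    (hP : P.IsPrime)
    (hIP : Ideal.span {M : MvPolynomial (Fin n) k |
        ∃ j l, t j ≠ t l ∧ M = pairMonomial (s j) (s l)} ≤ P) :
    Ideal.span {M : MvPolynomial (Fin n) k |
        ∃ j l, t j ≠ t l ∧ M = pairMonomial (s j) (s l)} ≤
      Ideal.span (X '' {i | X i ∈ P}) := by
  rw [Ideal.span_le]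
  rintro _ ⟨j, l, ht, rfl⟩
  have hmP : pairMonomial (s j) (s l) ∈ P := hIP (Ideal.subset_span ⟨j, l, ht, rfl⟩)
  rw [pairMonomial] at hmP
  obtain ⟨i, hi, hXi⟩ := (Ideal.IsPrime.prod_mem_iff (hp := hP)).1 hmP
  exact pairMonomial_mem_spanX.2 ⟨i, hXi, (Finset.mem_filter.1 hi).2⟩

end Aux

/-- Over a finite field `k`, with data `(s j, t j)` and `M_X` the
ideal generated by all monomials `m(s j, s l)` with `t j ≠ t l`, a prime ideal `P`
is a minimal prime over `M_X` iff `P = ⟨x i : i ∈ G⟩` for some subset `G` that is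
minimal with respect to inclusion among the subsets `G'` supporting a polynomial
fitting the data. -/
theorem minimalPrimes_iff_minimal_variable_sets
    (k : Type*) [Field k] [Fintype k] [DecidableEq k] (n m : ℕ)
    (s : Fin m → Fin n → k) (t : Fin m → k) (P : Ideal (MvPolynomial (Fin n) k)) :
    P ∈ (Ideal.span {M : MvPolynomial (Fin n) k |
          ∃ j l, t j ≠ t l ∧ M = pairMonomial (s j) (s l)}).minimalPrimes ↔
      ∃ G : Set (Fin n), P = Ideal.span (MvPolynomial.X '' G) ∧
        (∃ f ∈ MvPolynomial.supported k G, ∀ j, MvPolynomial.eval (s j) f = t j) ∧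
        ∀ G' : Set (Fin n),
          (∃ f ∈ MvPolynomial.supported k G', ∀ j, MvPolynomial.eval (s j) f = t j) →
          G' ⊆ G → G' = G := by
  classical
  constructor
  · rintro ⟨⟨hP, hIP⟩, hmin⟩
    set G := {i : Fin n | X i ∈ P} with hG
    have hQle : Ideal.span (X '' G) ≤ P := by
      rw [Ideal.span_le]
      rintro _ ⟨i, hi, rfl⟩
      exact hi
    have hIQ := prime_varSpan_le s t hP hIP
    have hPQ : P = Ideal.span (X '' G) :=
      le_antisymm (hmin ⟨spanX_isPrime G, hIQ⟩ hQle) hQle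
    refine ⟨G, hPQ, (span_le_iff_exists_fit G s t).1 hIQ, ?_⟩
    intro G' hfit' hsub
    have hIQ' := (span_le_iff_exists_fit G' s t).2 hfit'
    have hQ'le : Ideal.span (X '' G') ≤ P :=
      le_trans (Ideal.span_mono (Set.image_mono hsub)) hQle
    have hPle := hmin ⟨spanX_isPrime G', hIQ'⟩ hQ'le
    apply Set.Subset.antisymm hsub
    intro i hiG
    exact X_mem_spanX.1 (hPle hiG)
  · rintro ⟨G, rfl, hfit, hminG⟩
    refine ⟨⟨spanX_isPrime G, (span_le_iff_exists_fit G s t).2 hfit⟩, ?_⟩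
    rintro Q ⟨hQprime, hIQ⟩ hQle
    set G'' := {i : Fin n | X i ∈ Q} with hG''
    have h1 := prime_varSpan_le s t hQprime hIQ
    have hfit'' := (span_le_iff_exists_fit G'' s t).1 h1
    have hsub : G'' ⊆ G := fun i hi => X_mem_spanX.1 (hQle hi)
    have hGG : G'' = G := hminG G'' hfit'' hsub
    rw [← hGG, Ideal.span_le]
    rintro _ ⟨i, hi, rfl⟩
    exact hi
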